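/- Let d ≥ 1, r > 0, let ν be a finite nonnegative Borel measure on 𝕋^d, let {y_m}_{m=1}^M ⊂ 𝕋^d be points with 𝕋^d ⊆ ∪_{m=1}^M B_r(y_m), and let {ζ_m}_{m=1}^M be a continuous partition of unity subordinate to this cover (each ζ_m ≥ 0 with support contained in B_r(y_m) and Σ_{m=1}^M ζ_m(y) = 1 for all y). Let g : 𝕋^d → ℝ be Lipschitz with a continuous r-local Lipschitz modulus h : 𝕋^d → [0,∞). Then for every y ∈ 𝕋^d both of the following hold: |g ∗ ν(y) − Σ_{m=1}^M g ∗ ν(y_m) ζ_m(y)| ≤ r · (h ∗ ν)(y), and |g ∗ ν(y) − Σ_{m=1}^M g ∗ ν(y_m) ζ_m(y)| ≤ r · Σ_{m=1}^M ζ_m(y) (h ∗ ν)(y_m). -/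

import Mathlib

open MeasureTheory Real Set
open scoped ENNReal BigOperators

noncomputable section

/-- Euclidean space ℝ^d. Points of the flat torus 𝕋^d = ℝ^d/ℤ^d are modelled by
representatives in ℝ^d, and functions on 𝕋^d by ℤ^d-periodic functions on ℝ^d. -/
abbrev E (d : ℕ) := EuclideanSpace ℝ (Fin d)

/-- The lattice vector of ℤ^d associated to `k`. -/
def latVec (d : ℕ) (k : Fin d → ℤ) : E d := WithLp.toLp 2 (fun i => (k i : ℝ))

/-- The torus "norm" |x|_{𝕋^d} = inf_{k ∈ ℤ^d} |x + k|. -/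
def tnorm (d : ℕ) (x : E d) : ℝ := ⨅ k : Fin d → ℤ, ‖x + latVec d k‖

/-- ℤ^d-periodicity: `f` descends to a function on the torus 𝕋^d. -/
def TPer {d : ℕ} {α : Type*} (f : E d → α) : Prop :=
  ∀ (x : E d) (k : Fin d → ℤ), f (x + latVec d k) = f x

/-- The fundamental domain [-1/2, 1/2)^d of the torus. -/
def fundDom (d : ℕ) : Set (E d) := {x | ∀ i, x i ∈ Set.Ico (-(1/2) : ℝ) (1/2)}

/-- Supremum of a real-valued function over a set. -/
def supOn {d : ℕ} (s : Set (E d)) (f : E d → ℝ) : ℝ := sSup (f '' s)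

/-- g is Lipschitz continuous on the torus. -/
def TLip {d : ℕ} (g : E d → ℝ) : Prop :=
  ∃ C : ℝ, ∀ x y : E d, |g x - g y| ≤ C * tnorm d (x - y)

/-- h is an r-local Lipschitz modulus for g:
|g(x) − g(y)| ≤ h(y)·|x−y|_{𝕋^d} whenever |x−y|_{𝕋^d} < r. -/
def IsLocMod (d : ℕ) (r : ℝ) (g h : E d → ℝ) : Prop :=
  ∀ x y : E d, tnorm d (x - y) < r → |g x - g y| ≤ h y * tnorm d (x - y)

/-- Convolution of a function on the torus with a finite measure:
(g ∗ ν)(y) := ∫ g(y−y') dν(y'). -/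
def convM (d : ℕ) (g : E d → ℝ) (ν : Measure (E d)) (y : E d) : ℝ :=
  ∫ y', g (y - y') ∂ν

/-- Interpolation error bounds for convolutions via a partition of unity
subordinate to a cover of the torus by balls B_r(y_m):
|g∗ν(y) − Σ_m g∗ν(y_m) ζ_m(y)| ≤ r (h∗ν)(y) and ≤ r Σ_m ζ_m(y) (h∗ν)(y_m). -/
lemma latVec_zero (d : ℕ) : latVec d 0 = 0 := by
  ext i; simp [latVec]

lemma latVec_neg (d : ℕ) (k : Fin d → ℤ) : latVec d (-k) = - latVec d k := by
  ext i; simp [latVec]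

lemma tnorm_bdd (d : ℕ) (x : E d) : BddBelow (Set.range fun k => ‖x + latVec d k‖) := by
  exact ⟨0, by rintro _ ⟨k, rfl⟩; positivity⟩

lemma tnorm_le (d : ℕ) (x : E d) (k : Fin d → ℤ) : tnorm d x ≤ ‖x + latVec d k‖ :=
  ciInf_le (tnorm_bdd d x) k

lemma tnorm_nonneg (d : ℕ) (x : E d) : 0 ≤ tnorm d x :=
  le_ciInf fun k => norm_nonneg _

lemma tnorm_le_norm (d : ℕ) (x : E d) : tnorm d x ≤ ‖x‖ := by
  have := tnorm_le d x 0
  simpa [latVec_zero] using this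

lemma tnorm_neg (d : ℕ) (x : E d) : tnorm d (-x) = tnorm d x := by
  have key : ∀ z : E d, tnorm d (-z) ≤ tnorm d z := by
    intro z
    refine le_ciInf fun k => ?_
    have : ‖z + latVec d k‖ = ‖-z + latVec d (-k)‖ := by
      rw [latVec_neg]
      rw [show -z + -latVec d k = -(z + latVec d k) by abel, norm_neg]
    rw [this]
    exact tnorm_le d (-z) (-k)
  refine le_antisymm (key x) ?_
  have := key (-x)
  simpa using this

lemma exists_rep (d : ℕ) (x : E d) : ∃ k, ‖x + latVec d k‖ ≤ Real.sqrt d := by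
  refine ⟨fun i => -(round (x i)), ?_⟩
  rw [EuclideanSpace.norm_eq]
  have : ∀ i, ‖(x + latVec d fun i => -(round (x i))) i‖ ^ 2 ≤ 1 := by
    intro i
    have h1 : (x + latVec d fun i => -(round (x i))) i = x i - round (x i) := by
      simp [latVec]; ring
    rw [h1, Real.norm_eq_abs]
    have := abs_sub_round (x i)
    nlinarith [abs_nonneg (x i - round (x i))]
  calc Real.sqrt (∑ i, ‖(x + latVec d fun i => -(round (x i))) i‖ ^ 2)
      ≤ Real.sqrt (∑ _i : Fin d, (1:ℝ)) := by
        apply Real.sqrt_le_sqrt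
        exact Finset.sum_le_sum fun i _ => this i
    _ = Real.sqrt d := by simp

lemma per_bounded {d : ℕ} {f : E d → ℝ} (hp : TPer f) (hc : Continuous f) :
    ∃ C, ∀ x, |f x| ≤ C := by
  obtain ⟨C, hC⟩ := (isCompact_closedBall (0 : E d) (Real.sqrt d)).exists_bound_of_continuousOn
    hc.continuousOn
  refine ⟨C, fun x => ?_⟩
  obtain ⟨k, hk⟩ := exists_rep d x
  have : f x = f (x + latVec d k) := (hp x k).symm
  rw [this]
  have hmem : x + latVec d k ∈ Metric.closedBall (0 : E d) (Real.sqrt d) := by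
    simpa [Metric.mem_closedBall, dist_eq_norm] using hk
  simpa using hC _ hmem

lemma TLip.continuous {d : ℕ} {g : E d → ℝ} (hg : TLip g) : Continuous g := by
  obtain ⟨C, hC⟩ := hg
  have : LipschitzWith ⟨max C 0, le_max_right _ _⟩ g := by
    refine LipschitzWith.of_dist_le_mul fun x z => ?_
    rw [Real.dist_eq, dist_eq_norm]
    calc |g x - g z| ≤ C * tnorm d (x - z) := hC x z
      _ ≤ max C 0 * tnorm d (x - z) :=
          mul_le_mul_of_nonneg_right (le_max_left _ _) (tnorm_nonneg _ _)
      _ ≤ max C 0 * ‖x - z‖ :=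
          mul_le_mul_of_nonneg_left (tnorm_le_norm _ _) (le_max_right _ _)
  exact this.continuous

lemma per_integrable {d : ℕ} {f : E d → ℝ} (hp : TPer f) (hc : Continuous f)
    (ν : Measure (E d)) [IsFiniteMeasure ν] (a : E d) :
    Integrable (fun y' => f (a - y')) ν := by
  obtain ⟨C, hC⟩ := per_bounded hp hc
  refine Integrable.mono' (integrable_const C) ?_ (ae_of_all _ fun y' => ?_)
  · exact (hc.comp (continuous_const.sub continuous_id)).aestronglyMeasurable
  · simpa using hC (a - y')

theorem stmt_8 (d M : ℕ) (hd : 1 ≤ d) (r : ℝ) (hr : 0 < r)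
    (ν : Measure (E d)) (hν : IsFiniteMeasure ν)
    (ym : Fin M → E d) (hcover : ∀ x : E d, ∃ m, tnorm d (x - ym m) < r)
    (ζ : Fin M → E d → ℝ)
    (hζper : ∀ m, TPer (ζ m)) (hζc : ∀ m, Continuous (ζ m)) (hζ0 : ∀ m x, 0 ≤ ζ m x)
    (hζsupp : ∀ m x, ζ m x ≠ 0 → tnorm d (x - ym m) < r)
    (hζsum : ∀ x, ∑ m, ζ m x = 1)
    (g h : E d → ℝ) (hgper : TPer g) (hgLip : TLip g)
    (hhper : TPer h) (hh0 : ∀ x, 0 ≤ h x) (hhc : Continuous h)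
    (hmod : IsLocMod d r g h) :
    ∀ y : E d,
      |convM d g ν y - ∑ m, convM d g ν (ym m) * ζ m y| ≤ r * convM d h ν y ∧
      |convM d g ν y - ∑ m, convM d g ν (ym m) * ζ m y|
        ≤ r * ∑ m, ζ m y * convM d h ν (ym m) := by
  intro y
  have hgc : Continuous g := hgLip.continuous
  have hgint : ∀ a : E d, Integrable (fun y' => g (a - y')) ν :=
    fun a => per_integrable hgper hgc ν a
  have hhint : ∀ a : E d, Integrable (fun y' => h (a - y')) ν :=
    fun a => per_integrable hhper hhc ν a
  have key : ∀ m, tnorm d (y - ym m) < r → ∀ a : E d,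
      (∀ y' : E d, |g (y - y') - g (ym m - y')| ≤ r * h (a - y')) →
      |convM d g ν y - convM d g ν (ym m)| ≤ r * convM d h ν a := by
    intro m hm a hb
    unfold convM
    rw [← integral_sub (hgint y) (hgint (ym m))]
    calc |∫ y', (g (y - y') - g (ym m - y')) ∂ν|
        ≤ ∫ y', |g (y - y') - g (ym m - y')| ∂ν := by
          simpa using norm_integral_le_integral_norm fun y' => g (y - y') - g (ym m - y')
      _ ≤ ∫ y', r * h (a - y') ∂ν := by
          exact integral_mono ((hgint y).sub (hgint (ym m))).abs
            ((hhint a).const_mul r) hb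
      _ = r * ∫ y', h (a - y') ∂ν := integral_const_mul r _
  have key1 : ∀ m, ζ m y ≠ 0 →
      |convM d g ν y - convM d g ν (ym m)| ≤ r * convM d h ν y := by
    intro m hm
    have hlt := hζsupp m y hm
    refine key m hlt y fun y' => ?_
    have h1 : tnorm d ((ym m - y') - (y - y')) < r := by
      have e : (ym m - y') - (y - y') = -(y - ym m) := by abel
      rw [e, tnorm_neg]; exact hlt
    have := hmod (ym m - y') (y - y') h1
    rw [abs_sub_comm]
    calc |g (ym m - y') - g (y - y')|
        ≤ h (y - y') * tnorm d ((ym m - y') - (y - y')) := this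
      _ ≤ h (y - y') * r := mul_le_mul_of_nonneg_left h1.le (hh0 _)
      _ = r * h (y - y') := mul_comm _ _
  have key2 : ∀ m, ζ m y ≠ 0 →
      |convM d g ν y - convM d g ν (ym m)| ≤ r * convM d h ν (ym m) := by
    intro m hm
    have hlt := hζsupp m y hm
    refine key m hlt (ym m) fun y' => ?_
    have h1 : tnorm d ((y - y') - (ym m - y')) < r := by
      have e : (y - y') - (ym m - y') = y - ym m := by abel
      rw [e]; exact hlt
    have := hmod (y - y') (ym m - y') h1
    calc |g (y - y') - g (ym m - y')|
        ≤ h (ym m - y') * tnorm d ((y - y') - (ym m - y')) := this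
      _ ≤ h (ym m - y') * r := mul_le_mul_of_nonneg_left h1.le (hh0 _)
      _ = r * h (ym m - y') := mul_comm _ _
  have hrw : convM d g ν y - ∑ m, convM d g ν (ym m) * ζ m y
      = ∑ m, ζ m y * (convM d g ν y - convM d g ν (ym m)) := by
    rw [Finset.sum_congr rfl (fun m _ => mul_sub (ζ m y) _ _),
        Finset.sum_sub_distrib, ← Finset.sum_mul, hζsum, one_mul]
    congr 1
    exact Finset.sum_congr rfl fun m _ => mul_comm _ _
  have habs : |convM d g ν y - ∑ m, convM d g ν (ym m) * ζ m y|
      ≤ ∑ m, ζ m y * |convM d g ν y - convM d g ν (ym m)| := by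
    rw [hrw]
    refine (Finset.abs_sum_le_sum_abs _ _).trans ?_
    refine Finset.sum_le_sum fun m _ => ?_
    rw [abs_mul, abs_of_nonneg (hζ0 m y)]
  constructor
  · calc |convM d g ν y - ∑ m, convM d g ν (ym m) * ζ m y|
        ≤ ∑ m, ζ m y * |convM d g ν y - convM d g ν (ym m)| := habs
      _ ≤ ∑ m, ζ m y * (r * convM d h ν y) := by
          refine Finset.sum_le_sum fun m _ => ?_
          by_cases hm : ζ m y = 0
          · simp [hm]
          · exact mul_le_mul_of_nonneg_left (key1 m hm) (hζ0 m y)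
      _ = r * convM d h ν y := by
          rw [← Finset.sum_mul, hζsum, one_mul]
  · calc |convM d g ν y - ∑ m, convM d g ν (ym m) * ζ m y|
        ≤ ∑ m, ζ m y * |convM d g ν y - convM d g ν (ym m)| := habs
      _ ≤ ∑ m, ζ m y * (r * convM d h ν (ym m)) := by
          refine Finset.sum_le_sum fun m _ => ?_
          by_cases hm : ζ m y = 0
          · simp [hm]
          · exact mul_le_mul_of_nonneg_left (key2 m hm) (hζ0 m y)
      _ = r * ∑ m, ζ m y * convM d h ν (ym m) := by
          rw [Finset.mul_sum]
          exact Finset.sum_congr rfl fun m _ => by ring
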